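/- arXiv:1305.5329 — 3 statements merged into one kernel-verified Lean document; each statement's English description precedes it below -/
import Mathlib

section
/- Let A be a unital (not necessarily commutative) ring, a, b ∈ A, s₀ = 1 − b·a, s₁ = 1 − a·b, L = [[s₀, −(1+s₀)·b],[a, s₁]] ∈ M₂(A) with inverse L⁻¹ = [[s₀, (1+s₀)·b],[−a, s₁]], and let E₁₁ = [[1,0],[0,0]] and E₂₂ = [[0,0],[0,1]]. Then P := L·E₁₁·L⁻¹ is an idempotent (P² = P) and the residue matrix R := P − E₂₂ is given explicitly by R = [[s₀², s₀(1+s₀)·b],[s₁·a, −s₁²]]. -/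
/-- The Connes–Moscovici idempotent `P = L·E₁₁·L⁻¹` and residue matrix
`R = P − E₂₂`: with `s₀ = 1 − b·a`, `s₁ = 1 − a·b`,
`L = [[s₀, −(1+s₀)·b],[a, s₁]]`, `L⁻¹ = [[s₀, (1+s₀)·b],[−a, s₁]]`,
`E₁₁ = [[1,0],[0,0]]` and `E₂₂ = [[0,0],[0,1]]`, the matrix `P := L·E₁₁·L⁻¹`
is an idempotent and `R := P − E₂₂ = [[s₀², s₀(1+s₀)·b],[s₁·a, −s₁²]]`. -/
theorem connesMoscovici_idempotent_and_residue
    {A : Type*} [Ring A] (a b s₀ s₁ : A)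
    (hs₀ : s₀ = 1 - b * a) (hs₁ : s₁ = 1 - a * b)
    (L Linv E₁₁ E₂₂ P R : Matrix (Fin 2) (Fin 2) A)
    (hL : L = !![s₀, -((1 + s₀) * b); a, s₁])
    (hLinv : Linv = !![s₀, (1 + s₀) * b; -a, s₁])
    (hE₁₁ : E₁₁ = !![1, 0; 0, 0])
    (hE₂₂ : E₂₂ = !![0, 0; 0, 1])
    (hP : P = L * E₁₁ * Linv)
    (hR : R = P - E₂₂) :
    P * P = P ∧ R = !![s₀ ^ 2, s₀ * (1 + s₀) * b; s₁ * a, -s₁ ^ 2] := by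
  subst hs₀ hs₁ hL hLinv hE₁₁ hE₂₂ hP hR
  constructor <;> ext i j <;> fin_cases i <;> fin_cases j <;>
    simp [Matrix.mul_apply, Fin.sum_univ_two] <;> noncomm_ring
end

section
/- Let 𝕜 be a field, let V and W be finite-dimensional 𝕜-vector spaces, and let a : V → W and b : W → V be linear maps. Set s₀ = id_V − b∘a and s₁ = id_W − a∘b. Then trace(s₀²) − trace(s₁²) = (dim ker a − dim (W / range a)) · 1_𝕜, i.e. the difference of the traces of the squared remainders equals the Fredholm index of a. -/
theorem aux_exp {𝕜 M : Type*} [Field 𝕜] [AddCommGroup M] [Module 𝕜 M]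
    (f : M →ₗ[𝕜] M) :
    (LinearMap.id - f) ∘ₗ (LinearMap.id - f) = LinearMap.id - f - f + f ∘ₗ f := by
  ext x
  simp only [LinearMap.comp_apply, LinearMap.sub_apply, LinearMap.add_apply,
    LinearMap.id_apply, map_sub]
  abel

/-- If `a : V → W` and `b : W → V` are linear maps between finite-dimensional
vector spaces over a field `𝕜`, and `s₀ = id_V − b∘a`, `s₁ = id_W − a∘b`,
then `trace(s₀²) − trace(s₁²) = (dim ker a − dim coker a) · 1_𝕜`,
i.e. the difference of the traces of the squared remainders is the Fredholm
index of `a`. -/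
theorem trace_sq_remainders_eq_index
    {𝕜 V W : Type*} [Field 𝕜]
    [AddCommGroup V] [Module 𝕜 V] [FiniteDimensional 𝕜 V]
    [AddCommGroup W] [Module 𝕜 W] [FiniteDimensional 𝕜 W]
    (a : V →ₗ[𝕜] W) (b : W →ₗ[𝕜] V)
    (s₀ : V →ₗ[𝕜] V) (s₁ : W →ₗ[𝕜] W)
    (hs₀ : s₀ = LinearMap.id - b ∘ₗ a) (hs₁ : s₁ = LinearMap.id - a ∘ₗ b) :
    LinearMap.trace 𝕜 V (s₀ ∘ₗ s₀) - LinearMap.trace 𝕜 W (s₁ ∘ₗ s₁)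
      = ((Module.finrank 𝕜 (LinearMap.ker a) : ℤ)
          - (Module.finrank 𝕜 (W ⧸ LinearMap.range a) : ℤ)) • (1 : 𝕜) := by
  subst hs₀ hs₁
  have h1 : LinearMap.trace 𝕜 V ((b ∘ₗ a) ∘ₗ (b ∘ₗ a))
      = LinearMap.trace 𝕜 W ((a ∘ₗ b) ∘ₗ (a ∘ₗ b)) := by
    rw [show (b ∘ₗ a) ∘ₗ (b ∘ₗ a) = b ∘ₗ ((a ∘ₗ b) ∘ₗ a) by
          simp [LinearMap.comp_assoc],
        LinearMap.trace_comp_comm', LinearMap.comp_assoc]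
  have h2 : LinearMap.trace 𝕜 V (b ∘ₗ a) = LinearMap.trace 𝕜 W (a ∘ₗ b) :=
    by rw [LinearMap.trace_comp_comm']
  rw [aux_exp, aux_exp]
  simp only [map_add, map_sub, LinearMap.trace_id, h1, h2]
  have key : (Module.finrank 𝕜 V : ℤ) - (Module.finrank 𝕜 W : ℤ)
      = (Module.finrank 𝕜 (LinearMap.ker a) : ℤ)
        - (Module.finrank 𝕜 (W ⧸ LinearMap.range a) : ℤ) := by
    have hV := LinearMap.finrank_range_add_finrank_ker a
    have hW := Submodule.finrank_quotient_add_finrank (LinearMap.range a)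
    omega
  have : ((Module.finrank 𝕜 V : ℤ) : 𝕜) - ((Module.finrank 𝕜 W : ℤ) : 𝕜)
      = (((Module.finrank 𝕜 (LinearMap.ker a) : ℤ)
          - (Module.finrank 𝕜 (W ⧸ LinearMap.range a) : ℤ) : ℤ) : 𝕜) := by
    rw [← Int.cast_sub, key]
  push_cast at this
  rw [zsmul_eq_mul, mul_one]
  push_cast
  linear_combination this
end

section
/- Let 𝕜 be a field, let V and W be finite-dimensional 𝕜-vector spaces, and let a : V → W and b : W → V be linear maps. Then for every integer n ≥ 1, trace((id_V − b∘a)^n) − trace((id_W − a∘b)^n) = (dim V − dim W) · 1_𝕜. -/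
open Finset

private lemma aux_cast_smul {𝕜 M : Type*} [Field 𝕜] [AddCommGroup M] [Module 𝕜 M]
    (f : Module.End 𝕜 M) (k j c : ℕ) :
    (-f) ^ k * 1 ^ j * (c : Module.End 𝕜 M) = (((-1) ^ k * c : ℤ)) • f ^ k := by
  rw [neg_pow, one_pow, mul_one, zsmul_eq_mul]
  push_cast
  rw [mul_assoc, ← (Nat.cast_commute c (f ^ k)).eq, ← mul_assoc]


/-- If `a : V → W` and `b : W → V` are linear maps between finite-dimensional
vector spaces over a field `𝕜`, then for every `n ≥ 1`,
`trace((id_V − b∘a)^n) − trace((id_W − a∘b)^n) = (dim V − dim W) · 1_𝕜`. -/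
theorem trace_pow_remainders_eq_index
    {𝕜 V W : Type*} [Field 𝕜]
    [AddCommGroup V] [Module 𝕜 V] [FiniteDimensional 𝕜 V]
    [AddCommGroup W] [Module 𝕜 W] [FiniteDimensional 𝕜 W]
    (a : V →ₗ[𝕜] W) (b : W →ₗ[𝕜] V) (n : ℕ) (hn : 1 ≤ n) :
    LinearMap.trace 𝕜 V (((1 : Module.End 𝕜 V) - b ∘ₗ a) ^ n)
      - LinearMap.trace 𝕜 W (((1 : Module.End 𝕜 W) - a ∘ₗ b) ^ n)
      = ((Module.finrank 𝕜 V : ℤ) - (Module.finrank 𝕜 W : ℤ)) • (1 : 𝕜) := by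
  have comp_pow : ∀ m : ℕ, ((b ∘ₗ a : Module.End 𝕜 V)) ^ (m + 1)
      = b ∘ₗ ((((a ∘ₗ b : Module.End 𝕜 W)) ^ m) ∘ₗ a) := by
    intro m
    induction m with
    | zero =>
      ext v
      simp [pow_succ]
    | succ m ih =>
      rw [pow_succ, ih]
      ext v
      simp [pow_succ, Module.End.mul_apply, LinearMap.comp_apply]
  have key : ∀ m : ℕ, LinearMap.trace 𝕜 V (((b ∘ₗ a : Module.End 𝕜 V)) ^ (m + 1))
      = LinearMap.trace 𝕜 W (((a ∘ₗ b : Module.End 𝕜 W)) ^ (m + 1)) := by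
    intro m
    rw [comp_pow, LinearMap.trace_comp_comm' ((((a ∘ₗ b : Module.End 𝕜 W)) ^ m) ∘ₗ a) b]
    congr 1
  rw [show ((1 : Module.End 𝕜 V) - b ∘ₗ a) = -(b ∘ₗ a) + 1 from sub_eq_neg_add 1 _,
    show ((1 : Module.End 𝕜 W) - a ∘ₗ b) = -(a ∘ₗ b) + 1 from sub_eq_neg_add 1 _,
    (Commute.one_right (-(b ∘ₗ a : Module.End 𝕜 V))).add_pow,
    (Commute.one_right (-(a ∘ₗ b : Module.End 𝕜 W))).add_pow,
    map_sum, map_sum, Finset.sum_range_succ', Finset.sum_range_succ']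
  have e0V : LinearMap.trace 𝕜 V ((-(b ∘ₗ a : Module.End 𝕜 V)) ^ 0 * 1 ^ (n - 0) * (n.choose 0 : Module.End 𝕜 V))
      = (Module.finrank 𝕜 V : 𝕜) := by simp [LinearMap.trace_one]
  have e0W : LinearMap.trace 𝕜 W ((-(a ∘ₗ b : Module.End 𝕜 W)) ^ 0 * 1 ^ (n - 0) * (n.choose 0 : Module.End 𝕜 W))
      = (Module.finrank 𝕜 W : 𝕜) := by simp [LinearMap.trace_one]
  rw [e0V, e0W]
  have hs : ∀ m ∈ Finset.range n,
      LinearMap.trace 𝕜 V ((-(b ∘ₗ a : Module.End 𝕜 V)) ^ (m + 1) * 1 ^ (n - (m + 1)) * (n.choose (m+1) : Module.End 𝕜 V))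
      = LinearMap.trace 𝕜 W ((-(a ∘ₗ b : Module.End 𝕜 W)) ^ (m + 1) * 1 ^ (n - (m + 1)) * (n.choose (m+1) : Module.End 𝕜 W)) := by
    intro m _
    rw [aux_cast_smul, aux_cast_smul, map_zsmul, map_zsmul, key]
  rw [Finset.sum_congr rfl hs]
  simp only [zsmul_eq_mul, Int.cast_sub, Int.cast_natCast, mul_one]
  ring
end
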